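/- arXiv:1804.04658 — 3 statements merged into one kernel-verified Lean document; each statement's English description precedes it below -/
import Mathlib

section
/- For every m ≥ 1, in every proper 4-coloring of the double wheel D_{2m+1}, the two hub vertices u and v receive the same color; that is, {u, v} is a color identical pair of D_{2m+1}. -/
/-- The double wheel `D_n`: the cycle graph on `Fin n` (vertices `Sum.inl i`) together
with two new nonadjacent hub vertices `Sum.inr 0` and `Sum.inr 1`, each adjacent to
every cycle vertex. -/
def doubleWheel (n : ℕ) : SimpleGraph (Fin n ⊕ Fin 2) :=
  SimpleGraph.fromRel (fun x y =>
    (∃ (k : Fin 2) (i : Fin n), x = Sum.inr k ∧ y = Sum.inl i) ∨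
    (∃ i j : Fin n, x = Sum.inl i ∧ y = Sum.inl j ∧ (SimpleGraph.cycleGraph n).Adj i j))

lemma fin4_two_values : ∀ a b x y z : Fin 4, a ≠ b → x ≠ a → x ≠ b → y ≠ a → y ≠ b →
    z ≠ a → z ≠ b → x ≠ y → z ≠ x → z = y := by decide

lemma doubleWheel_hub_adj {n : ℕ} (k : Fin 2) (i : Fin n) :
    (doubleWheel n).Adj (Sum.inr k) (Sum.inl i) := by
  exact ⟨by simp, Or.inl (Or.inl ⟨k, i, rfl, rfl⟩)⟩

lemma doubleWheel_cycle_adj {n : ℕ} {i j : Fin n}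
    (h : (SimpleGraph.cycleGraph n).Adj i j) :
    (doubleWheel n).Adj (Sum.inl i) (Sum.inl j) := by
  exact ⟨by simp [h.ne], Or.inl (Or.inr ⟨i, j, rfl, rfl, h⟩)⟩

open Fin.NatCast Fin.CommRing

/-- For every `m ≥ 1`, in every proper `4`-coloring of the double wheel `D_{2m+1}`
the two hubs receive the same color: `{u, v}` is a color identical pair. -/
theorem doubleWheel_hubs_color_identical (m : ℕ) (hm : 1 ≤ m)
    (c : (doubleWheel (2 * m + 1)).Coloring (Fin 4)) :
    c (Sum.inr 0) = c (Sum.inr 1) := by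
  by_contra hab
  -- every cycle vertex avoids the hub colors
  have hca : ∀ i : Fin (2 * m + 1), c (Sum.inl i) ≠ c (Sum.inr 0) :=
    fun i h => (c.valid (doubleWheel_hub_adj 0 i)) h.symm
  have hcb : ∀ i : Fin (2 * m + 1), c (Sum.inl i) ≠ c (Sum.inr 1) :=
    fun i h => (c.valid (doubleWheel_hub_adj 1 i)) h.symm
  -- consecutive cycle vertices differ
  have hadj : ∀ i : Fin (2 * m + 1), c (Sum.inl (i + 1)) ≠ c (Sum.inl i) := by
    intro i
    have h1 : (SimpleGraph.cycleGraph (2 * m + 1)).Adj (i + 1) i := by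
      rw [SimpleGraph.cycleGraph_adj']
      left
      have h2 : (i + 1) - i = (1 : Fin (2 * m + 1)) := by ring
      rw [h2, Fin.val_one']
      norm_num
      omega
    exact c.valid (doubleWheel_cycle_adj h1)
  have hxy : c (Sum.inl (0 : Fin (2 * m + 1))) ≠ c (Sum.inl (1 : Fin (2 * m + 1))) := by
    have h01 : (SimpleGraph.cycleGraph (2 * m + 1)).Adj 0 1 := by
      rw [SimpleGraph.cycleGraph_adj']
      right
      have h2 : (1 : Fin (2 * m + 1)) - 0 = (1 : Fin (2 * m + 1)) := by ring
      rw [h2, Fin.val_one']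
      norm_num
      omega
    exact c.valid (doubleWheel_cycle_adj h01)
  -- by induction: even positions get the color of vertex 0, odd that of vertex 1
  have key : ∀ k : ℕ, c (Sum.inl ((k : Fin (2 * m + 1)))) =
      if k % 2 = 0 then c (Sum.inl (0 : Fin (2 * m + 1)))
      else c (Sum.inl (1 : Fin (2 * m + 1))) := by
    intro k
    induction k with
    | zero => simp
    | succ k ih =>
      have step : c (Sum.inl ((k : Fin (2 * m + 1)) + 1)) ≠
          c (Sum.inl ((k : Fin (2 * m + 1)))) := hadj _
      have hcast : ((k + 1 : ℕ) : Fin (2 * m + 1)) = ((k : Fin (2 * m + 1))) + 1 := by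
        push_cast; ring
      rw [hcast]
      rcases Nat.even_or_odd k with hk | hk
      · have hk0 : k % 2 = 0 := Nat.even_iff.mp hk
        rw [hk0, if_pos rfl] at ih
        have h1 : (k + 1) % 2 = 1 := by omega
        rw [h1]
        simp only [if_neg (by omega : ¬(1 : ℕ) = 0)]
        exact fin4_two_values _ _ _ _ _ hab (hca 0) (hcb 0) (hca 1) (hcb 1)
          (hca _) (hcb _) hxy (ih ▸ step)
      · have hk1 : k % 2 = 1 := Nat.odd_iff.mp hk
        rw [hk1] at ih
        simp only [if_neg (by omega : ¬(1 : ℕ) = 0)] at ih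
        have h1 : (k + 1) % 2 = 0 := by omega
        rw [h1, if_pos rfl]
        exact fin4_two_values _ _ _ _ _ hab (hca 1) (hcb 1) (hca 0) (hcb 0)
          (hca _) (hcb _) hxy.symm (ih ▸ step)
  have h0 := key (2 * m + 1)
  have hodd : (2 * m + 1) % 2 = 1 := by omega
  rw [hodd] at h0
  simp only [if_neg (by omega : ¬(1 : ℕ) = 0)] at h0
  rw [Fin.natCast_self] at h0
  exact hxy h0
end

section
/- Fix n ≥ 1 and odd integers 2m_1+1, ..., 2m_n+1 with each m_i ≥ 1, and consider the wheel chain graph W(m_1, ..., m_n) with hub vertices h_0, h_1, ..., h_n and pairwise disjoint cycles C_1, ..., C_n, where C_i is a cycle on 2m_i+1 vertices, and where for each i both h_{i-1} and h_i are adjacent to every vertex of C_i (and there are no other edges). Then in every proper 4-coloring of W(m_1, ..., m_n), all the hub vertices h_0, h_1, ..., h_n receive the same color. -/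
lemma two_vals (x y : Fin 4) (hxy : x ≠ y) :
    ∃ u v : Fin 4, ∀ z, z ≠ x → z ≠ y → z = u ∨ z = v := by
  revert hxy; revert x y; decide

open Fin.NatCast Fin.CommRing in
lemma odd_cycle_no_two_coloring (N : ℕ) (hN : N % 2 = 1) (h3 : 3 ≤ N)
    (f : Fin N → Fin 4) (u v : Fin 4)
    (hadj : ∀ a b, (SimpleGraph.cycleGraph N).Adj a b → f a ≠ f b)
    (hval : ∀ a, f a = u ∨ f a = v) : False := by
  obtain ⟨M, rfl⟩ : ∃ M, N = M + 3 := ⟨N - 3, by omega⟩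
  have hone : ((1 : Fin (M+3))).val = 1 := by
    simpa using Fin.val_cast_of_lt (show (1:ℕ) < M + 3 by omega)
  have step : ∀ k : ℕ, f ((k+1 : ℕ) : Fin (M+3)) ≠ f ((k : ℕ) : Fin (M+3)) := by
    intro k
    apply hadj
    rw [SimpleGraph.cycleGraph_adj']
    left
    have : ((k+1 : ℕ) : Fin (M+3)) = ((k : ℕ) : Fin (M+3)) + 1 := by push_cast; ring
    rw [this]
    simpa using hone
  have even : ∀ k : ℕ, f ((2*k : ℕ) : Fin (M+3)) = f ((0 : ℕ) : Fin (M+3)) := by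
    intro k
    induction k with
    | zero => rfl
    | succ k ih =>
      have h1 := step (2*k)
      have h2 : f ((2*(k+1) : ℕ) : Fin (M+3)) ≠ f ((2*k+1 : ℕ) : Fin (M+3)) := by
        have := step (2*k+1)
        convert this using 3 <;> ring
      rcases hval ((2*(k+1) : ℕ) : Fin (M+3)) with ha | ha <;>
        rcases hval ((2*k+1 : ℕ) : Fin (M+3)) with hb | hb <;>
        rcases hval ((2*k : ℕ) : Fin (M+3)) with hc | hc <;>
        simp_all
  have hlast : f ((M+2 : ℕ) : Fin (M+3)) = f ((0:ℕ) : Fin (M+3)) := by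
    have e : ((M+2:ℕ) : Fin (M+3)) = ((2*((M+2)/2) : ℕ) : Fin (M+3)) := by
      congr 1; omega
    rw [e]; exact even _
  have hadj' : f ((M+2 : ℕ) : Fin (M+3)) ≠ f ((0:ℕ) : Fin (M+3)) := by
    apply hadj
    rw [SimpleGraph.cycleGraph_adj']
    right
    have hz : ((M+2 : ℕ) : Fin (M+3)) + 1 = 0 := by
      have : ((M+2 : ℕ) : Fin (M+3)) + 1 = ((M+3 : ℕ) : Fin (M+3)) := by push_cast; ring
      rw [this, Fin.natCast_self]
    have h : ((0:ℕ) : Fin (M+3)) - ((M+2 : ℕ) : Fin (M+3)) = 1 := by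
      rw [sub_eq_iff_eq_add, Nat.cast_zero, ← hz]; ring
    rw [h, hone]
  exact hadj' hlast

/-- The wheel chain `W(m_1, …, m_n)`: hub vertices `h_0, …, h_n` (given as `Sum.inl i`
for `i : Fin (n+1)`) and pairwise disjoint odd cycles `C_1, …, C_n`, where the `i`-th
cycle has vertices `Sum.inr ⟨i, a⟩` for `a : Fin (2 * m i + 1)` carrying the adjacency
of the cycle graph on `2 * m i + 1` vertices, and where both `h_{i-1} = Sum.inl i.castSucc`
and `h_i = Sum.inl i.succ` are adjacent to every vertex of the `i`-th cycle;
there are no other edges. -/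
def wheelChain (n : ℕ) (m : Fin n → ℕ) :
    SimpleGraph (Fin (n + 1) ⊕ (Σ i : Fin n, Fin (2 * m i + 1))) :=
  SimpleGraph.fromRel (fun x y =>
    (∃ (i : Fin n) (a b : Fin (2 * m i + 1)),
      x = Sum.inr ⟨i, a⟩ ∧ y = Sum.inr ⟨i, b⟩ ∧
        (SimpleGraph.cycleGraph (2 * m i + 1)).Adj a b) ∨
    (∃ (i : Fin n) (a : Fin (2 * m i + 1)),
      (x = Sum.inl i.castSucc ∨ x = Sum.inl i.succ) ∧ y = Sum.inr ⟨i, a⟩))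

/-- In every proper `4`-coloring of the wheel chain `W(m_1, …, m_n)` (with `n ≥ 1` and
every `m i ≥ 1`), all the hub vertices `h_0, …, h_n` receive the same color. -/
theorem wheelChain_hubs_color_identical (n : ℕ) (hn : 1 ≤ n)
    (m : Fin n → ℕ) (hm : ∀ i, 1 ≤ m i)
    (c : (wheelChain n m).Coloring (Fin 4)) :
    ∀ i j : Fin (n + 1), c (Sum.inl i) = c (Sum.inl j) := by
  -- adjacent hubs have the same color
  have key : ∀ i : Fin n, c (Sum.inl i.castSucc) = c (Sum.inl i.succ) := by
    intro i
    by_contra hne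
    set x := c (Sum.inl (i.castSucc : Fin (n+1))) with hx
    set y := c (Sum.inl (i.succ : Fin (n+1))) with hy
    obtain ⟨u, v, huv⟩ := two_vals x y hne
    set f : Fin (2 * m i + 1) → Fin 4 := fun a => c (Sum.inr ⟨i, a⟩) with hf
    have hub1 : ∀ a, f a ≠ x := by
      intro a
      have hadj : (wheelChain n m).Adj (Sum.inl i.castSucc) (Sum.inr ⟨i, a⟩) := by
        rw [wheelChain, SimpleGraph.fromRel_adj]
        exact ⟨by simp, Or.inl (Or.inr ⟨i, a, Or.inl rfl, rfl⟩)⟩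
      exact fun h => (c.valid hadj) (h.symm)
    have hub2 : ∀ a, f a ≠ y := by
      intro a
      have hadj : (wheelChain n m).Adj (Sum.inl i.succ) (Sum.inr ⟨i, a⟩) := by
        rw [wheelChain, SimpleGraph.fromRel_adj]
        exact ⟨by simp, Or.inl (Or.inr ⟨i, a, Or.inr rfl, rfl⟩)⟩
      exact fun h => (c.valid hadj) (h.symm)
    apply odd_cycle_no_two_coloring (2 * m i + 1) (by omega) (by have := hm i; omega) f u v
    · intro a b hab
      have hadj : (wheelChain n m).Adj (Sum.inr ⟨i, a⟩) (Sum.inr ⟨i, b⟩) := by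
        rw [wheelChain, SimpleGraph.fromRel_adj]
        refine ⟨?_, Or.inl (Or.inl ⟨i, a, b, rfl, rfl, hab⟩)⟩
        simp only [ne_eq, Sum.inr.injEq]
        intro h
        exact hab.ne (by simpa using (Sigma.mk.inj_iff.mp h).2)
      exact c.valid hadj
    · intro a
      exact huv (f a) (hub1 a) (hub2 a)
  -- all hubs equal hub 0
  have all0 : ∀ j : Fin (n+1), c (Sum.inl j) = c (Sum.inl (0 : Fin (n+1))) := by
    intro j
    induction j using Fin.induction with
    | zero => rfl
    | succ i ih => exact (key i).symm.trans ih
  intro i j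
  rw [all0 i, all0 j]
end

section
/- Fix n ≥ 1 and odd integers 2m_1+1, ..., 2m_n+1 with each m_i ≥ 1, and let W(m_1, ..., m_n) be the wheel chain with hubs h_0, ..., h_n and disjoint odd cycles C_1, ..., C_n, where for each i both h_{i-1} and h_i are adjacent to every vertex of C_i. Then the chromatic number of W(m_1, ..., m_n) is 4, while the graph obtained from W(m_1, ..., m_n) by adding the edge h_0 h_n has chromatic number 5. -/
section WheelChainAux

open SimpleGraph

lemma WheelChainAux.fin_sub_one {N : ℕ} (hN : 2 ≤ N) {a b : Fin N} (h : (a - b).val = 1) :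
    a.val = b.val + 1 ∨ (b.val = N - 1 ∧ a.val = 0) := by
  rw [Fin.sub_def] at h
  have ha := a.isLt; have hb := b.isLt
  simp only at h
  rcases Nat.lt_or_ge (N - b.val + a.val) N with h' | h'
  · rw [Nat.mod_eq_of_lt h'] at h; omega
  · rw [Nat.mod_eq_sub_mod h', Nat.mod_eq_of_lt (by omega)] at h; omega

/-- explicit 3-coloring of the odd cycle -/
def WheelChainAux.cycCol (m : ℕ) (a : Fin (2 * m + 1)) : Fin 3 :=
  if a.val = 2 * m then 2 else ⟨a.val % 2, by omega⟩

lemma WheelChainAux.cycCol_valid {m : ℕ} (hm : 1 ≤ m) {a b : Fin (2 * m + 1)}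
    (h : (cycleGraph (2 * m + 1)).Adj a b) : cycCol m a ≠ cycCol m b := by
  rw [cycleGraph_adj'] at h
  have key : ∀ u v : Fin (2 * m + 1), u.val = v.val + 1 ∨ (v.val = 2 * m ∧ u.val = 0) →
      cycCol m u ≠ cycCol m v := by
    intro u v huv
    have hu := u.isLt; have hv := v.isLt
    unfold cycCol
    split_ifs with h1 h2 h2 <;> simp [Fin.ext_iff] <;> omega
  rcases h with h | h
  · exact key a b (by simpa using fin_sub_one (by omega) h)
  · exact (key b a (by simpa using fin_sub_one (by omega) h)).symm

lemma WheelChainAux.no_two_coloring {m : ℕ} (hm : 1 ≤ m) (f : Fin (2 * m + 1) → Fin 2)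
    (hf : ∀ a b, (cycleGraph (2 * m + 1)).Adj a b → f a ≠ f b) : False := by
  have hadj : ∀ (k : ℕ) (hk : k + 1 < 2 * m + 1),
      (cycleGraph (2 * m + 1)).Adj ⟨k + 1, hk⟩ ⟨k, by omega⟩ := by
    intro k hk
    rw [cycleGraph_adj']
    left
    rw [Fin.sub_def]
    simp only
    have e : 2 * m + 1 - k + (k + 1) = (2 * m + 1) + 1 := by omega
    rw [e, Nat.add_mod_left, Nat.mod_eq_of_lt (by omega)]
  have claim : ∀ (k : ℕ) (hk : k < 2 * m + 1),
      (f ⟨k, hk⟩).val = (k + (f ⟨0, by omega⟩).val) % 2 := by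
    intro k
    induction k with
    | zero => intro hk; have := (f ⟨0, by omega⟩).isLt; omega
    | succ k ih =>
      intro hk
      have h1 := ih (by omega)
      have h2 := hf _ _ (hadj k hk)
      have h3 : (f ⟨k + 1, hk⟩).val ≠ (f ⟨k, by omega⟩).val := fun e => h2 (Fin.ext e)
      have := (f ⟨k + 1, hk⟩).isLt
      have := (f ⟨k, by omega⟩).isLt
      have := (f ⟨0, by omega⟩).isLt
      omega
  have hadj0 : (cycleGraph (2 * m + 1)).Adj ⟨0, by omega⟩ ⟨2 * m, by omega⟩ := by
    rw [cycleGraph_adj']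
    left
    rw [Fin.sub_def]
    simp only
    have e : 2 * m + 1 - 2 * m + 0 = 1 := by omega
    rw [e, Nat.mod_eq_of_lt (by omega)]
  have h2 := hf _ _ hadj0
  have h3 := claim (2 * m) (by omega)
  have h4 := claim 0 (by omega)
  have := (f ⟨0, by omega⟩).isLt
  have := (f ⟨2 * m, by omega⟩).isLt
  exact h2 (Fin.ext (by omega)).symm

lemma WheelChainAux.aux3 : ∀ h : Fin 3, ∃ g : Fin 3 → Fin 2, ∀ c c' : Fin 3,
    c ≠ h → c' ≠ h → g c = g c' → c = c' := by decide

lemma WheelChainAux.aux4 : ∀ h1 h2 : Fin 4, h1 ≠ h2 → ∃ g : Fin 4 → Fin 2, ∀ c c' : Fin 4,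
    c ≠ h1 → c ≠ h2 → c' ≠ h1 → c' ≠ h2 → g c = g c' → c = c' := by decide

end WheelChainAux


section WheelChainAux2
open SimpleGraph WheelChainAux

lemma WheelChainAux.adj_hub {n : ℕ} {m : Fin n → ℕ} (i : Fin n) (a : Fin (2 * m i + 1))
    {x : Fin (n + 1) ⊕ (Σ i : Fin n, Fin (2 * m i + 1))}
    (hx : x = Sum.inl i.castSucc ∨ x = Sum.inl i.succ) :
    (wheelChain n m).Adj x (Sum.inr ⟨i, a⟩) := by
  rw [wheelChain, fromRel_adj]
  constructor
  · rcases hx with rfl | rfl <;> simp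
  · exact Or.inl (Or.inr ⟨i, a, hx, rfl⟩)

lemma WheelChainAux.adj_cyc {n : ℕ} {m : Fin n → ℕ} (i : Fin n) {a b : Fin (2 * m i + 1)}
    (hab : (cycleGraph (2 * m i + 1)).Adj a b) :
    (wheelChain n m).Adj (Sum.inr ⟨i, a⟩) (Sum.inr ⟨i, b⟩) := by
  rw [wheelChain, fromRel_adj]
  exact ⟨by simp [hab.ne], Or.inl (Or.inl ⟨i, a, b, rfl, rfl, hab⟩)⟩

/-- any function differing across cycle edges and between hubs and cycle vertices is a
proper coloring of the wheel chain -/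
lemma WheelChainAux.coloring_valid {α : Type*} {n : ℕ} {m : Fin n → ℕ}
    (col : (Fin (n + 1) ⊕ (Σ i : Fin n, Fin (2 * m i + 1))) → α)
    (h1 : ∀ (i : Fin n) (a b : Fin (2 * m i + 1)), (cycleGraph (2 * m i + 1)).Adj a b →
      col (Sum.inr ⟨i, a⟩) ≠ col (Sum.inr ⟨i, b⟩))
    (h2 : ∀ (k : Fin (n + 1)) (i : Fin n) (a : Fin (2 * m i + 1)),
      col (Sum.inl k) ≠ col (Sum.inr ⟨i, a⟩)) :
    ∀ ⦃v w⦄, (wheelChain n m).Adj v w → col v ≠ col w := by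
  intro v w hadj
  rw [wheelChain, fromRel_adj] at hadj
  obtain ⟨-, h | h⟩ := hadj
  · rcases h with ⟨i, a, b, rfl, rfl, hab⟩ | ⟨i, a, hx, rfl⟩
    · exact h1 i a b hab
    · rcases hx with rfl | rfl
      · exact h2 _ i a
      · exact h2 _ i a
  · rcases h with ⟨i, a, b, rfl, rfl, hab⟩ | ⟨i, a, hx, rfl⟩
    · exact (h1 i a b hab).symm
    · rcases hx with rfl | rfl
      · exact (h2 _ i a).symm
      · exact (h2 _ i a).symm

end WheelChainAux2


open SimpleGraph WheelChainAux

/-- The wheel chain `W(m_1, …, m_n)` (with `n ≥ 1` and every `m i ≥ 1`) has chromatic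
number `4`, while adding the edge `h_0 h_n` produces a graph of chromatic number `5`. -/
theorem wheelChain_chromaticNumber_and_join (n : ℕ) (hn : 1 ≤ n)
    (m : Fin n → ℕ) (hm : ∀ i, 1 ≤ m i) :
    (wheelChain n m).chromaticNumber = 4 ∧
    (wheelChain n m ⊔
      SimpleGraph.fromEdgeSet {s((Sum.inl 0 : Fin (n + 1) ⊕ (Σ i : Fin n, Fin (2 * m i + 1))),
        Sum.inl (Fin.last n))}).chromaticNumber = 5 := by
  set G := wheelChain n m with hG
  set G' := G ⊔ SimpleGraph.fromEdgeSet
      {s((Sum.inl 0 : Fin (n + 1) ⊕ (Σ i : Fin n, Fin (2 * m i + 1))), Sum.inl (Fin.last n))}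
    with hG'
  -- the 4-coloring of G
  have C4 : G.Coloring (Fin 4) := by
    refine Coloring.mk
      (fun x => match x with
        | Sum.inl _ => 3
        | Sum.inr ⟨i, a⟩ => (cycCol (m i) a).castLE (by omega)) ?_
    apply coloring_valid
    · intro i a b hab
      simp only [ne_eq, Fin.castLE_inj]
      exact cycCol_valid (hm i) hab
    · intro k i a
      simp only [ne_eq, Fin.ext_iff]
      have := (cycCol (m i) a).isLt
      simp only [Fin.coe_castLE]
      omega
  -- the 5-coloring of G'
  have C5 : G'.Coloring (Fin 5) := by
    set col : (Fin (n + 1) ⊕ (Σ i : Fin n, Fin (2 * m i + 1))) → Fin 5 :=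
      (fun x => match x with
        | Sum.inl k => if k = 0 then 4 else 3
        | Sum.inr ⟨i, a⟩ => (cycCol (m i) a).castLE (by omega)) with hcol
    refine Coloring.mk col ?_
    intro v w hadj
    rw [hG', sup_adj] at hadj
    rcases hadj with hadj | hadj
    · refine coloring_valid col ?_ ?_ hadj
      · intro i a b hab
        show (cycCol (m i) a).castLE (by omega) ≠ (cycCol (m i) b).castLE (by omega)
        simp only [ne_eq, Fin.castLE_inj]
        exact cycCol_valid (hm i) hab
      · intro k i a
        show (if k = 0 then (4 : Fin 5) else 3) ≠ (cycCol (m i) a).castLE (by omega)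
        have := (cycCol (m i) a).isLt
        split_ifs <;> simp only [ne_eq, Fin.ext_iff, Fin.coe_castLE] <;>
          simp only [show ((4 : Fin 5) : ℕ) = 4 from rfl, show ((3 : Fin 5) : ℕ) = 3 from rfl] <;>
          omega
    · rw [fromEdgeSet_adj] at hadj
      obtain ⟨he, hne⟩ := hadj
      simp only [Set.mem_singleton_iff, Sym2.eq_iff] at he
      have hlast : (Fin.last n : Fin (n + 1)) ≠ 0 := by
        simp [Fin.ext_iff]; omega
      rcases he with ⟨rfl, rfl⟩ | ⟨rfl, rfl⟩ <;>
        simp only [hcol, if_pos rfl, if_neg hlast] <;> decide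
  -- lower bound: G is not 3-colorable
  have not3 : ¬ G.Colorable 3 := by
    rintro ⟨C⟩
    set i0 : Fin n := ⟨0, hn⟩ with hi0
    obtain ⟨g, hg⟩ := aux3 (C (Sum.inl i0.castSucc))
    refine no_two_coloring (hm i0) (fun a => g (C (Sum.inr ⟨i0, a⟩))) ?_
    intro a b hab hgeq
    have hAa := C.valid (adj_hub i0 a (Or.inl rfl))
    have hAb := C.valid (adj_hub i0 b (Or.inl rfl))
    have := hg _ _ (Ne.symm hAa) (Ne.symm hAb) hgeq
    exact (C.valid (adj_cyc i0 hab)) this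
  -- lower bound: G' is not 4-colorable
  have not4 : ¬ G'.Colorable 4 := by
    rintro ⟨C⟩
    have hGle : G ≤ G' := le_sup_left
    have hub_const : ∀ i : Fin n, C (Sum.inl i.castSucc) = C (Sum.inl i.succ) := by
      intro i
      by_contra hne
      obtain ⟨g, hg⟩ := aux4 _ _ hne
      refine no_two_coloring (hm i) (fun a => g (C (Sum.inr ⟨i, a⟩))) ?_
      intro a b hab hgeq
      have hAa1 := C.valid (hGle (adj_hub i a (Or.inl rfl)))
      have hAa2 := C.valid (hGle (adj_hub i a (Or.inr rfl)))
      have hAb1 := C.valid (hGle (adj_hub i b (Or.inl rfl)))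
      have hAb2 := C.valid (hGle (adj_hub i b (Or.inr rfl)))
      have := hg _ _ (Ne.symm hAa1) (Ne.symm hAa2) (Ne.symm hAb1) (Ne.symm hAb2) hgeq
      exact (C.valid (hGle (adj_cyc i hab))) this
    have const : ∀ (k : ℕ) (hk : k ≤ n),
        C (Sum.inl ⟨k, by omega⟩) = C (Sum.inl ⟨0, by omega⟩) := by
      intro k
      induction k with
      | zero => intro _; rfl
      | succ k ih =>
        intro hk
        have h1 := ih (by omega)
        have h2 := hub_const ⟨k, by omega⟩
        have e1 : (Fin.castSucc ⟨k, by omega⟩ : Fin (n + 1)) = ⟨k, by omega⟩ := rfl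
        have e2 : (Fin.succ ⟨k, by omega⟩ : Fin (n + 1)) = ⟨k + 1, by omega⟩ := rfl
        rw [e1, e2] at h2
        rw [← h2]
        exact h1
    have hedge : G'.Adj (Sum.inl 0) (Sum.inl (Fin.last n)) := by
      refine Or.inr ?_
      rw [fromEdgeSet_adj]
      refine ⟨by simp, ?_⟩
      simp only [ne_eq, Sum.inl.injEq, Fin.ext_iff, Fin.val_last, Fin.val_zero]
      omega
    have := C.valid hedge
    apply this
    have e0 : (0 : Fin (n + 1)) = ⟨0, by omega⟩ := rfl
    have el : (Fin.last n : Fin (n + 1)) = ⟨n, by omega⟩ := rfl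
    rw [e0, el, const n le_rfl]
  constructor
  · refine le_antisymm (Colorable.chromaticNumber_le ⟨C4⟩) ?_
    by_contra hlt
    rw [not_le] at hlt
    have : G.chromaticNumber ≤ 3 := by
      have h4 : (4 : ℕ∞) = 3 + 1 := by norm_num
      rw [h4] at hlt
      exact Order.le_of_lt_add_one hlt
    exact not3 (chromaticNumber_le_iff_colorable.mp this)
  · refine le_antisymm (Colorable.chromaticNumber_le ⟨C5⟩) ?_
    by_contra hlt
    rw [not_le] at hlt
    have : G'.chromaticNumber ≤ 4 := by
      have h5 : (5 : ℕ∞) = 4 + 1 := by norm_num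
      rw [h5] at hlt
      exact Order.le_of_lt_add_one hlt
    exact not4 (chromaticNumber_le_iff_colorable.mp this)
end
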